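/- Let {ξ, A, ξ×A} ⊆ S² ∩ ℚ³ be an orthonormal basis of ℝ³ and let n* ∈ ℕ be such that n*ξ, n*A, n*(ξ×A) ∈ ℤ³. Let F : ℝ → ℝ be 2π-periodic and continuous and let G : ℝ² → ℝ be 2π-periodic in each variable and continuous. Fix c > 0 with the property that f(x) := F(c n* (x·ξ + μt)) and g(x) := G(c n* (x−α)·A, c n* (x−α)·(ξ×A)) are 2π-periodic in each coordinate of x for every t ∈ ℝ, α ∈ ℝ³, μ ∈ ℝ (as is the case for the intermittent jets, where c = r_⊥λ with λ r_⊥ ∈ ℕ). Then for every p ∈ [1,∞), sup_{t∈ℝ} ‖f g‖_{L^p(T³)} = (2π)^{−3/p} (sup_{t∈ℝ} ‖f‖_{L^p(T³)}) ‖g‖_{L^p(T³)}; more precisely, at each fixed t one has ∫_{T³} |f g|^p dx = (2π)^{−3} (∫_{T³} |f|^p dx)(∫_{T³} |g|^p dx). -/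

import Mathlib

open MeasureTheory Real
open scoped ENNReal NNReal

noncomputable section

abbrev R3 := Fin 3 → ℝ
abbrev Z3 := Fin 3 → ℤ

def cube : Set R3 := Set.univ.pi fun _ => Set.Icc 0 (2 * π)

def μT3 : Measure R3 := volume.restrict cube

def Periodic3 {α : Type*} (u : R3 → α) : Prop :=
  ∀ (x : R3) (k : Z3), u (fun i => x i + 2 * π * (k i)) = u x

def dotZ (n : Z3) (x : R3) : ℝ := ∑ i, (n i : ℝ) * x i

def eZ (n : Z3) (x : R3) : ℂ := Complex.exp (Complex.I * (dotZ n x : ℂ))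

def fCoeff (u : R3 → ℂ) (n : Z3) : ℂ :=
  (1 / (2 * π) ^ 3 : ℝ) • ∫ y in cube, Complex.exp (-(Complex.I * (dotZ n y : ℂ))) * u y

def normZsq (n : Z3) : ℝ := ∑ i, (n i : ℝ) ^ 2

def pd {E : Type*} [NormedAddCommGroup E] [NormedSpace ℝ E] (i : Fin 3) (h : R3 → E) :
    R3 → E :=
  fun x => fderiv ℝ h x (Pi.single i 1)

def cross (u v : R3) : R3 :=
  ![u 1 * v 2 - u 2 * v 1, u 2 * v 0 - u 0 * v 2, u 0 * v 1 - u 1 * v 0]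

/-- `f(t,x) = F(c n* (x·ξ + μt))`. -/
def jetF (F : ℝ → ℝ) (c : ℝ) (nstar : ℕ) (ξ : R3) (μ t : ℝ) (x : R3) : ℝ :=
  F (c * (nstar : ℝ) * ((∑ i, x i * ξ i) + μ * t))

/-- `g(x) = G(c n* (x-α)·A, c n* (x-α)·(ξ×A))`. -/
def jetG (G : ℝ → ℝ → ℝ) (c : ℝ) (nstar : ℕ) (ξ A α : R3) (x : R3) : ℝ :=
  G (c * (nstar : ℝ) * (∑ i, (x i - α i) * A i))
    (c * (nstar : ℝ) * (∑ i, (x i - α i) * cross ξ A i))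

def twoPiBasis : Module.Basis (Fin 3) ℝ R3 :=
  (Pi.basisFun ℝ (Fin 3)).unitsSMul (fun _ => Units.mk0 (2 * π) (by positivity))

lemma fd_eq : ZSpan.fundamentalDomain twoPiBasis = Set.univ.pi fun _ => Set.Ico 0 (2 * π) := by
  have h2π : (0:ℝ) < 2 * π := by positivity
  ext x
  simp only [ZSpan.fundamentalDomain, Set.mem_setOf_eq, twoPiBasis, Module.Basis.repr_unitsSMul,
    Pi.basisFun_repr, Set.mem_pi, Set.mem_univ, forall_true_left, Set.mem_Ico]
  refine forall_congr' fun i => ?_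
  rw [Units.smul_def, Units.val_inv_eq_inv_val, Units.val_mk0, smul_eq_mul, inv_mul_eq_div, le_div_iff₀ h2π,
    div_lt_one h2π, zero_mul]

lemma mem_lattice {l : R3} (hl : l ∈ Submodule.span ℤ (Set.range twoPiBasis)) :
    ∃ k : Z3, ∀ i, l i = 2 * π * (k i) := by
  induction hl using Submodule.span_induction with
  | mem x hx =>
      obtain ⟨i, rfl⟩ := hx
      refine ⟨Pi.single i 1, fun j => ?_⟩
      simp only [twoPiBasis, Module.Basis.unitsSMul_apply, Pi.basisFun_apply, Units.smul_def,
        Units.val_mk0, Pi.smul_apply, smul_eq_mul]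
      by_cases h : j = i
      · subst h; simp
      · simp [Pi.single_apply, h, Ne.symm h]
  | zero => exact ⟨0, fun i => by simp⟩
  | add x y _ _ hx hy =>
      obtain ⟨k1, hk1⟩ := hx; obtain ⟨k2, hk2⟩ := hy
      exact ⟨k1 + k2, fun i => by simp [hk1 i, hk2 i]; push_cast; ring⟩
  | smul z x _ hx =>
      obtain ⟨k, hk⟩ := hx
      refine ⟨z • k, fun i => ?_⟩
      simp [hk i]; push_cast; ring

lemma cube_ae_fd : cube =ᵐ[(volume : Measure R3)] ZSpan.fundamentalDomain twoPiBasis := by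
  rw [fd_eq]
  have hsub : (Set.univ.pi fun _ : Fin 3 => Set.Ico 0 (2*π)) ⊆ cube := by
    intro x hx i hi; exact Set.Ico_subset_Icc_self (hx i hi)
  have hzero : (volume : Measure R3) (cube \ Set.univ.pi fun _ : Fin 3 => Set.Ico 0 (2*π)) = 0 := by
    have hcover : (cube \ Set.univ.pi fun _ : Fin 3 => Set.Ico 0 (2*π)) ⊆
        ⋃ i : Fin 3, Set.univ.pi (Function.update (fun _ : Fin 3 => Set.Icc 0 (2*π)) i {2*π}) := by
      intro x ⟨hx1, hx2⟩
      simp only [Set.mem_pi, Set.mem_univ, forall_true_left, Set.mem_Ico, not_forall] at hx2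
      obtain ⟨i, hi⟩ := hx2
      have hxi := hx1 i (Set.mem_univ i)
      simp only [Set.mem_Icc] at hxi
      have : x i = 2*π := by
        rcases lt_or_eq_of_le hxi.2 with h | h
        · exact absurd ⟨hxi.1, h⟩ hi
        · exact h
      refine Set.mem_iUnion.2 ⟨i, fun j _ => ?_⟩
      rcases eq_or_ne j i with rfl | hj
      · simp [this]
      · simpa [Function.update_of_ne hj] using hx1 j (Set.mem_univ j)
    refine measure_mono_null hcover (measure_iUnion_null fun i => ?_)
    rw [volume_pi_pi]
    refine Finset.prod_eq_zero (Finset.mem_univ i) ?_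
    simp
  refine MeasureTheory.ae_eq_set.2 ⟨hzero, ?_⟩
  rw [Set.diff_eq_empty.2 hsub]
  simp

lemma Periodic3.setIntegral_translate {h : R3 → ℝ} (hper : Periodic3 h) (y : R3) :
    ∫ x in cube, h (x + y) = ∫ x in cube, h x := by
  set L := (Submodule.span ℤ (Set.range twoPiBasis)).toAddSubgroup with hL
  set D := ZSpan.fundamentalDomain twoPiBasis with hD
  have hFD : IsAddFundamentalDomain L D (volume : Measure R3) :=
    ZSpan.isAddFundamentalDomain' twoPiBasis volume
  haveI : Countable L := by
    change Countable (Submodule.span ℤ (Set.range twoPiBasis)); infer_instance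
  have hinv : ∀ (l : L) (x : R3), h ((l : R3) +ᵥ x) = h x := by
    rintro ⟨l, hl⟩ x
    obtain ⟨k, hk⟩ := mem_lattice (l := l) ((Submodule.mem_toAddSubgroup _).1 hl)
    have : (l +ᵥ x : R3) = fun i => x i + 2 * π * (k i) := by
      funext i
      show l i + x i = x i + 2 * π * (k i)
      rw [hk i]; ring
    rw [this, hper x k]
  -- translated fundamental domain
  have hFD' : IsAddFundamentalDomain L ((fun x : R3 => x + y) '' D) (volume : Measure R3) := by
    refine hFD.image_of_equiv (Equiv.addRight y)
      ?_ (Equiv.refl _) ?_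
    · exact (measurePreserving_add_right (volume : Measure R3) (-y)).quasiMeasurePreserving
    · intro g x
      show (g +ᵥ x) + y = g +ᵥ (x + y)
      exact add_assoc _ _ _
  have hcong : ∫ x in cube, h (x + y) = ∫ x in D, h (x + y) :=
    setIntegral_congr_set cube_ae_fd
  have hcong2 : ∫ x in cube, h x = ∫ x in D, h x := setIntegral_congr_set cube_ae_fd
  rw [hcong, hcong2]
  have hchg : ∫ x in (fun x : R3 => x + y) '' D, h x = ∫ x in D, h (x + y) :=
    (measurePreserving_add_right (volume : Measure R3) y).setIntegral_image_emb
      (MeasurableEquiv.addRight y).measurableEmbedding h D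
  rw [← hchg]
  exact hFD'.setIntegral_eq hFD hinv

lemma cube_compact : IsCompact cube := isCompact_univ_pi fun _ => isCompact_Icc

lemma key_avg (H : ℝ → ℝ) (hH : Continuous H) (hHper : Function.Periodic H (2*π))
    (w : R3 → ℝ) (hw : Continuous w) (ξ : R3) (hξu : ∑ i, ξ i ^ 2 = 1)
    (b : ℝ) (hb : 0 < b) (θ : ℝ)
    (hper : Periodic3 (fun x : R3 => H (b * (∑ i, x i * ξ i) + θ) * w x))
    (hwin : ∀ (s : ℝ) (x : R3), w (x + s • ξ) = w x) :
    ∫ x in cube, H (b * (∑ i, x i * ξ i) + θ) * w x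
      = (1/(2*π)) * (∫ u in (0:ℝ)..(2*π), H u) * ∫ x in cube, w x := by
  have h2π : (0:ℝ) < 2*π := by positivity
  set K := ∫ u in (0:ℝ)..(2*π), H u with hK
  set W := ∫ x in cube, w x with hW
  set I := ∫ x in cube, H (b * (∑ i, x i * ξ i) + θ) * w x with hI
  set L : ℝ := 2*π/b with hLdef
  have hL : 0 < L := by positivity
  set φ : ℝ → R3 → ℝ := fun s x => H (b*s + (b * (∑ i, x i * ξ i) + θ)) * w x with hφ
  have step1 : ∀ s : ℝ, ∫ x in cube, φ s x = I := by
    intro s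
    have htr := hper.setIntegral_translate (s • ξ)
    rw [hI, ← htr]
    congr 1
    funext x
    have hsum : ∑ i, ((x + s • ξ) i) * ξ i = (∑ i, x i * ξ i) + s := by
      have h1 : ∀ i ∈ Finset.univ, ((x + s • ξ) i) * ξ i = x i * ξ i + s * ξ i ^ 2 :=
        fun i _ => by simp [Pi.add_apply, Pi.smul_apply, smul_eq_mul]; ring
      rw [Finset.sum_congr rfl h1, Finset.sum_add_distrib, ← Finset.mul_sum, hξu, mul_one]
    show φ s x = H (b * (∑ i, ((x + s • ξ) i) * ξ i) + θ) * w (x + s • ξ)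
    rw [hsum, hwin s x]
    show H (b*s + (b * (∑ i, x i * ξ i) + θ)) * w x = _
    congr 2
    ring
  have hcontφ : Continuous fun z : ℝ × R3 => φ z.1 z.2 := by
    apply Continuous.mul
    · apply hH.comp
      apply Continuous.add
      · exact continuous_const.mul continuous_fst
      · apply Continuous.add
        · exact continuous_const.mul
            (continuous_finset_sum _ fun i _ =>
              ((continuous_apply i).comp continuous_snd).mul continuous_const)
        · exact continuous_const
    · exact hw.comp continuous_snd
  have hint : Integrable (fun z : ℝ × R3 => φ z.1 z.2)
      ((volume.restrict (Set.Ioc 0 L)).prod (volume.restrict cube)) := by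
    rw [Measure.prod_restrict, ← Measure.volume_eq_prod]
    refine IntegrableOn.mono_set ?_ (Set.prod_mono Set.Ioc_subset_Icc_self subset_rfl)
    exact hcontφ.continuousOn.integrableOn_compact (isCompact_Icc.prod cube_compact)
  have hswap := MeasureTheory.integral_integral_swap (f := fun s x => φ s x) hint
  have hleft : ∫ s in Set.Ioc (0:ℝ) L, (∫ x in cube, φ s x) = L * I := by
    simp only [step1]
    rw [integral_const, measureReal_def, Measure.restrict_apply_univ, Real.volume_Ioc, smul_eq_mul,
      ENNReal.toReal_ofReal (by linarith)]
    ring_nf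
  have hinner : ∀ a : ℝ, (∫ s in Set.Ioc (0:ℝ) L, H (b*s + a)) = b⁻¹ * K := by
    intro a
    rw [← intervalIntegral.integral_of_le hL.le,
      intervalIntegral.integral_comp_mul_add H hb.ne' a]
    have : b * L + a = a + 2*π := by rw [hLdef, mul_comm b, div_mul_cancel₀ _ hb.ne']; ring
    rw [mul_zero, zero_add, this, smul_eq_mul, hHper.intervalIntegral_add_eq a 0, zero_add]
  have hright : ∫ x in cube, (∫ s in Set.Ioc (0:ℝ) L, φ s x) = (b⁻¹ * K) * W := by
    have hpt : ∀ x : R3, (∫ s in Set.Ioc (0:ℝ) L, φ s x) = (b⁻¹ * K) * w x := by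
      intro x
      rw [hφ]
      rw [MeasureTheory.integral_mul_const, hinner (b * (∑ i, x i * ξ i) + θ)]
    simp only [hpt]
    exact MeasureTheory.integral_const_mul _ _
  have hEq : L * I = (b⁻¹ * K) * W := by rw [← hleft, ← hright]; exact hswap
  have hbne : b ≠ 0 := hb.ne'
  have hπ : π ≠ 0 := by positivity
  rw [show (1:ℝ)/(2*π) * K * W = (b⁻¹ * K * W)/L by rw [hLdef]; field_simp]
  rw [eq_div_iff hL.ne']
  linear_combination hEq

lemma cross_orth (ξ A : R3) : ∑ i, ξ i * cross ξ A i = 0 := by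
  simp [Fin.sum_univ_three, cross]; ring

lemma integral_one_cube : ∫ _x in cube, (1:ℝ) = (2*π)^3 := by
  have h2π : (0:ℝ) ≤ 2*π := by positivity
  rw [setIntegral_const, smul_eq_mul, mul_one]
  have : (volume : Measure R3) cube = ENNReal.ofReal (2*π) ^ 3 := by
    rw [cube, volume_pi_pi]
    simp [Real.volume_Icc]
  rw [measureReal_def, this, ENNReal.toReal_pow, ENNReal.toReal_ofReal h2π]

lemma rpow_helper (x y p : ℝ) (hx : 0 ≤ x) (hy : 0 ≤ y) (hp : 0 < p) :
    ((1/(2*π)) * x * y) ^ (1/p)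
      = (2*π) ^ (-(3/p)) * ((1/(2*π)) * x * (2*π)^3) ^ (1/p) * y ^ (1/p) := by
  have hA : (0:ℝ) < 2*π := by positivity
  have e1 : (1/(2*π)) * x * (2*π)^3 = (2*π)^(2:ℝ) * x := by
    rw [Real.rpow_two]; field_simp
  have l1 : ((1/(2*π)) * x * y)^(1/p) = (2*π)^(-(1/p)) * x^(1/p) * y^(1/p) := by
    rw [mul_assoc, Real.mul_rpow (by positivity) (mul_nonneg hx hy), Real.mul_rpow hx hy,
      one_div, ← Real.rpow_neg_one (2*π), ← Real.rpow_mul hA.le]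
    ring_nf
  have l2 : ((2*π)^(2:ℝ) * x)^(1/p) = (2*π)^((2:ℝ)/p) * x^(1/p) := by
    rw [Real.mul_rpow (Real.rpow_nonneg hA.le _) hx, ← Real.rpow_mul hA.le]
    ring_nf
  have l3 : (2*π)^(-(3/p)) * (2*π)^((2:ℝ)/p) = (2*π)^(-(1/p)) := by
    rw [← Real.rpow_add hA]
    ring_nf
  rw [e1, l1, l2, ← l3]
  ring

/-- For profiles oscillating in the direction `ξ` and in the orthogonal directions
`{A, ξ×A}`, the `L^p(T³)` norm of the product factorizes:
`∫_{T³}|fg|^p = (2π)⁻³ (∫_{T³}|f|^p)(∫_{T³}|g|^p)` at each time, and consequently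
`sup_t ‖fg‖_{L^p} = (2π)^{-3/p} (sup_t ‖f‖_{L^p}) ‖g‖_{L^p}`. -/
theorem jets_product_Lp_factorization
    (ξ A : R3) (hξu : ∑ i, ξ i ^ 2 = 1) (hAu : ∑ i, A i ^ 2 = 1)
    (horth : ∑ i, ξ i * A i = 0)
    (hξQ : ∀ i, ∃ q : ℚ, ξ i = (q : ℝ)) (hAQ : ∀ i, ∃ q : ℚ, A i = (q : ℝ))
    (hXQ : ∀ i, ∃ q : ℚ, cross ξ A i = (q : ℝ))
    (nstar : ℕ) (hn : 0 < nstar)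
    (hξZ : ∀ i, ∃ z : ℤ, (nstar : ℝ) * ξ i = (z : ℝ))
    (hAZ : ∀ i, ∃ z : ℤ, (nstar : ℝ) * A i = (z : ℝ))
    (hXZ : ∀ i, ∃ z : ℤ, (nstar : ℝ) * cross ξ A i = (z : ℝ))
    (F : ℝ → ℝ) (hF : Continuous F) (hFper : Function.Periodic F (2 * π))
    (G : ℝ → ℝ → ℝ) (hG : Continuous fun q : ℝ × ℝ => G q.1 q.2)
    (hGper1 : ∀ a b : ℝ, G (a + 2 * π) b = G a b)
    (hGper2 : ∀ a b : ℝ, G a (b + 2 * π) = G a b)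
    (c : ℝ) (hc : 0 < c)
    (hfper : ∀ t μ : ℝ, Periodic3 (jetF F c nstar ξ μ t))
    (hgper : ∀ α : R3, Periodic3 (jetG G c nstar ξ A α))
    (p : ℝ) (hp : 1 ≤ p) (μ : ℝ) (α : R3) :
    (∀ t : ℝ,
      (∫ x in cube, |jetF F c nstar ξ μ t x * jetG G c nstar ξ A α x| ^ p)
        = (1 / (2 * π) ^ 3)
          * (∫ x in cube, |jetF F c nstar ξ μ t x| ^ p)
          * (∫ x in cube, |jetG G c nstar ξ A α x| ^ p)) ∧
    ((⨆ t : ℝ, ENNReal.ofReal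
        ((∫ x in cube, |jetF F c nstar ξ μ t x * jetG G c nstar ξ A α x| ^ p) ^ (1 / p)))
      = ENNReal.ofReal ((2 * π) ^ (-(3 / p)))
        * (⨆ t : ℝ, ENNReal.ofReal
            ((∫ x in cube, |jetF F c nstar ξ μ t x| ^ p) ^ (1 / p)))
        * ENNReal.ofReal ((∫ x in cube, |jetG G c nstar ξ A α x| ^ p) ^ (1 / p))) := by
  have hp0 : (0:ℝ) < p := lt_of_lt_of_le one_pos hp
  have h2π : (0:ℝ) < 2 * π := by positivity
  have hns : (0:ℝ) < (nstar : ℝ) := Nat.cast_pos.2 hn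
  set b := c * (nstar : ℝ) with hb
  have hbpos : 0 < b := by positivity
  set H : ℝ → ℝ := fun u => |F u| ^ p with hH
  have hHcont : Continuous H := hF.abs.rpow_const fun u => Or.inr hp0.le
  have hHper : Function.Periodic H (2 * π) := fun u => by simp only [hH]; rw [hFper u]
  set w : R3 → ℝ := fun x => |jetG G c nstar ξ A α x| ^ p with hw
  have hGcont : Continuous (jetG G c nstar ξ A α) := by
    have h1 : Continuous fun x : R3 =>
        ((c * (nstar:ℝ) * (∑ i, (x i - α i) * A i),
          c * (nstar:ℝ) * (∑ i, (x i - α i) * cross ξ A i)) : ℝ × ℝ) := by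
      apply Continuous.prodMk
      · exact continuous_const.mul (continuous_finset_sum _ fun i _ =>
          ((continuous_apply i).sub continuous_const).mul continuous_const)
      · exact continuous_const.mul (continuous_finset_sum _ fun i _ =>
          ((continuous_apply i).sub continuous_const).mul continuous_const)
    exact hG.comp h1
  have hwcont : Continuous w := hGcont.abs.rpow_const fun x => Or.inr hp0.le
  set K := ∫ u in (0:ℝ)..(2 * π), H u with hKdef
  have hK0 : 0 ≤ K := by
    refine intervalIntegral.integral_nonneg h2π.le fun u _ => ?_
    exact Real.rpow_nonneg (abs_nonneg _) p
  have hcubeM : MeasurableSet cube := MeasurableSet.univ_pi fun _ => measurableSet_Icc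
  have hIg0 : 0 ≤ ∫ x in cube, |jetG G c nstar ξ A α x| ^ p :=
    setIntegral_nonneg hcubeM fun x _ => Real.rpow_nonneg (abs_nonneg _) p
  have hwin : ∀ (s : ℝ) (x : R3), w (x + s • ξ) = w x := by
    intro s x
    have hs1 : ∑ i, ((x + s • ξ) i - α i) * A i = ∑ i, (x i - α i) * A i := by
      have h1 : ∀ i ∈ Finset.univ, ((x + s • ξ) i - α i) * A i
          = (x i - α i) * A i + s * (ξ i * A i) := fun i _ => by
        simp only [Pi.add_apply, Pi.smul_apply, smul_eq_mul]; ring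
      rw [Finset.sum_congr rfl h1, Finset.sum_add_distrib, ← Finset.mul_sum, horth,
        mul_zero, add_zero]
    have hs2 : ∑ i, ((x + s • ξ) i - α i) * cross ξ A i
        = ∑ i, (x i - α i) * cross ξ A i := by
      have h1 : ∀ i ∈ Finset.univ, ((x + s • ξ) i - α i) * cross ξ A i
          = (x i - α i) * cross ξ A i + s * (ξ i * cross ξ A i) := fun i _ => by
        simp only [Pi.add_apply, Pi.smul_apply, smul_eq_mul]; ring
      rw [Finset.sum_congr rfl h1, Finset.sum_add_distrib, ← Finset.mul_sum, cross_orth,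
        mul_zero, add_zero]
    simp only [hw, jetG, hs1, hs2]
  have hfequ : ∀ (t : ℝ) (y : R3),
      H (b * (∑ i, y i * ξ i) + b * (μ * t)) = |jetF F c nstar ξ μ t y| ^ p := by
    intro t y
    simp only [hH, jetF]
    rw [show b * (∑ i, y i * ξ i) + b * (μ * t)
      = c * (nstar : ℝ) * ((∑ i, y i * ξ i) + μ * t) by rw [hb]; ring]
  have hperf : ∀ t : ℝ, Periodic3
      (fun x : R3 => H (b * (∑ i, x i * ξ i) + b * (μ * t)) * w x) := by
    intro t x k
    simp only [hfequ t, hw]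
    rw [hfper t μ x k, hgper α x k]
  have hperf1 : ∀ t : ℝ, Periodic3
      (fun x : R3 => H (b * (∑ i, x i * ξ i) + b * (μ * t)) * (fun _ : R3 => (1:ℝ)) x) := by
    intro t x k
    simp only [hfequ t, mul_one]
    rw [hfper t μ x k]
  have hIfg : ∀ t : ℝ, ∫ x in cube, |jetF F c nstar ξ μ t x * jetG G c nstar ξ A α x| ^ p
      = (1/(2*π)) * K * ∫ x in cube, |jetG G c nstar ξ A α x| ^ p := by
    intro t
    have hk := key_avg H hHcont hHper w hwcont ξ hξu b hbpos (b * (μ * t)) (hperf t) hwin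
    rw [← hKdef] at hk
    rw [← hk]
    congr 1
    funext x
    rw [abs_mul, Real.mul_rpow (abs_nonneg _) (abs_nonneg _), ← hfequ t x]
  have hIf : ∀ t : ℝ, ∫ x in cube, |jetF F c nstar ξ μ t x| ^ p
      = (1/(2*π)) * K * (2*π)^3 := by
    intro t
    have hk := key_avg H hHcont hHper (fun _ : R3 => (1:ℝ)) continuous_const ξ hξu b hbpos
      (b * (μ * t)) (hperf1 t) (fun s x => rfl)
    simp only [mul_one] at hk
    rw [integral_one_cube, ← hKdef] at hk
    rw [← hk]
    congr 1
    funext x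
    rw [← hfequ t x]
  constructor
  · intro t
    rw [hIfg t, hIf t]
    have hπ : π ≠ 0 := by positivity
    field_simp
    rfl
  · simp only [hIfg, hIf]
    rw [ciSup_const, ciSup_const]
    rw [← ENNReal.ofReal_mul (by positivity), ← ENNReal.ofReal_mul (by positivity)]
    exact congrArg ENNReal.ofReal
      (rpow_helper K (∫ x in cube, |jetG G c nstar ξ A α x| ^ p) p hK0 hIg0 hp0)
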